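/- Let ρ₁, ρ₂ > 0. Fix z ∈ (−1,1) with z ≠ 0, θ ∈ ℝ, and (u,v) ∈ ℝ². Then there exists μ ≠ 0 satisfying the four equations −μρ₁ − (z²/(1−z²))(u cos θ + v sin θ) = 0, −u sin θ + v cos θ = 0, μρ₂·u + cos θ = 0, and μρ₂·v + sin θ = 0, if and only if (u,v) = ε·√(ρ₁/ρ₂)·(√(1−z²)/z)·(cos θ, sin θ) for some ε ∈ {1, −1}. (This parametrizes the rank-1, elliptic-regular, singular points of the reversed b-coupled spin-oscillator.) -/

import Mathlib

/-- Parametrization of the rank-1 (elliptic-regular) singular points of the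
reversed b-coupled spin-oscillator: the proportionality equations
`μ·dL + dH = 0` admit a solution `μ ≠ 0` exactly when
`(u,v) = ±√(ρ₁/ρ₂)·(√(1−z²)/z)·(cos θ, sin θ)`. -/
theorem reversed_bCSO_rank_one_parametrization (ρ₁ ρ₂ : ℝ)
    (hρ₁ : 0 < ρ₁) (hρ₂ : 0 < ρ₂) (z θ u v : ℝ)
    (hz : z ∈ Set.Ioo (-1 : ℝ) 1) (hz0 : z ≠ 0) :
    (∃ μ : ℝ, μ ≠ 0 ∧
        -μ * ρ₁ - (z ^ 2 / (1 - z ^ 2)) * (u * Real.cos θ + v * Real.sin θ) = 0 ∧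
        -u * Real.sin θ + v * Real.cos θ = 0 ∧
        μ * ρ₂ * u + Real.cos θ = 0 ∧
        μ * ρ₂ * v + Real.sin θ = 0) ↔
      (∃ ε : ℝ, (ε = 1 ∨ ε = -1) ∧
        u = ε * Real.sqrt (ρ₁ / ρ₂) * (Real.sqrt (1 - z ^ 2) / z) * Real.cos θ ∧
        v = ε * Real.sqrt (ρ₁ / ρ₂) * (Real.sqrt (1 - z ^ 2) / z) * Real.sin θ) := by
  obtain ⟨hz1, hz2⟩ := hz
  have hw0 : (0:ℝ) < 1 - z ^ 2 := by nlinarith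
  set w := Real.sqrt (1 - z ^ 2) with hwdef
  set r := Real.sqrt (ρ₁ / ρ₂) with hrdef
  have hw2 : w ^ 2 = 1 - z ^ 2 := Real.sq_sqrt hw0.le
  have hr2 : r ^ 2 = ρ₁ / ρ₂ := Real.sq_sqrt (by positivity)
  have hwpos : 0 < w := Real.sqrt_pos.mpr hw0
  have hrpos : 0 < r := Real.sqrt_pos.mpr (by positivity)
  set c := Real.cos θ
  set s := Real.sin θ
  have hcs : c ^ 2 + s ^ 2 = 1 := by
    have := Real.sin_sq_add_cos_sq θ
    nlinarith [this]
  constructor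
  · rintro ⟨μ, hμ, e1, e2, e3, e4⟩
    have hc : c = -(μ * ρ₂ * u) := by linarith
    have hs : s = -(μ * ρ₂ * v) := by linarith
    have hc2 : c ^ 2 = μ ^ 2 * ρ₂ ^ 2 * u ^ 2 := by rw [hc]; ring
    have hs2 : s ^ 2 = μ ^ 2 * ρ₂ ^ 2 * v ^ 2 := by rw [hs]; ring
    have hnorm : μ ^ 2 * ρ₂ ^ 2 * (u ^ 2 + v ^ 2) = 1 := by
      linear_combination hcs - hc2 - hs2
    have e1' : -μ * ρ₁ * (1 - z ^ 2) - z ^ 2 * (u * c + v * s) = 0 := by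
      have h := e1
      have : z ^ 2 / (1 - z ^ 2) * (u * c + v * s) = -μ * ρ₁ := by linarith
      rw [div_mul_eq_mul_div, div_eq_iff hw0.ne'] at this
      linarith
    have hmul : μ * (-ρ₁ * (1 - z ^ 2) + z ^ 2 * ρ₂ * (u ^ 2 + v ^ 2)) = 0 := by
      linear_combination e1' + z ^ 2 * u * hc + z ^ 2 * v * hs
    have hK : ρ₁ * (1 - z ^ 2) = z ^ 2 * ρ₂ * (u ^ 2 + v ^ 2) := by
      rcases mul_eq_zero.mp hmul with h | h
      · exact absurd h hμ
      · linarith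
    set K := r * (w / z) with hKdef
    have hK2 : K ^ 2 = u ^ 2 + v ^ 2 := by
      have hKsq : K ^ 2 = ρ₁ / ρ₂ * (1 - z ^ 2) / z ^ 2 := by
        rw [hKdef, mul_pow, div_pow, hr2, hw2]; ring
      rw [hKsq, div_mul_eq_mul_div, div_div, div_eq_iff
        (mul_ne_zero hρ₂.ne' (pow_ne_zero 2 hz0))]
      linear_combination hK
    have hKne : K ≠ 0 := by
      intro h
      rw [h] at hK2
      have h0 : u ^ 2 + v ^ 2 = 0 := by simpa using hK2.symm
      rw [h0] at hnorm
      simp at hnorm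
    have hμρ₂K : μ * ρ₂ * K ≠ 0 := mul_ne_zero (mul_ne_zero hμ hρ₂.ne') hKne
    have h1 : μ ^ 2 * ρ₂ ^ 2 * K ^ 2 = 1 := by rw [hK2]; exact hnorm
    set ε := -1 / (μ * ρ₂ * K) with hεdef
    have hε2 : ε ^ 2 = 1 := by
      rw [hεdef, div_pow, div_eq_one_iff_eq (pow_ne_zero 2 hμρ₂K)]
      linear_combination -h1
    have hεcase : ε = 1 ∨ ε = -1 := by
      have h : (ε - 1) * (ε + 1) = 0 := by linear_combination hε2
      rcases mul_eq_zero.mp h with h | h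
      · left; linarith
      · right; linarith
    have hεK : ε * K = -1 / (μ * ρ₂) := by
      rw [hεdef]
      field_simp
    refine ⟨ε, hεcase, ?_, ?_⟩
    · have h2 : ε * r * (w / z) * c = (ε * K) * c := by rw [hKdef]; ring
      rw [h2, hεK, div_mul_eq_mul_div, eq_div_iff (mul_ne_zero hμ hρ₂.ne')]
      linear_combination e3
    · have h2 : ε * r * (w / z) * s = (ε * K) * s := by rw [hKdef]; ring
      rw [h2, hεK, div_mul_eq_mul_div, eq_div_iff (mul_ne_zero hμ hρ₂.ne')]
      linear_combination e4
  · rintro ⟨ε, hεcase, hu, hv⟩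
    have hε2 : ε ^ 2 = 1 := by rcases hεcase with h | h <;> rw [h] <;> norm_num
    have hε0 : ε ≠ 0 := by rcases hεcase with h | h <;> rw [h] <;> norm_num
    have hr2' : r ^ 2 * ρ₂ = ρ₁ := by rw [hr2]; field_simp
    refine ⟨-ε * z / (ρ₂ * r * w), ?_, ?_, ?_, ?_, ?_⟩
    · apply div_ne_zero
      · exact mul_ne_zero (neg_ne_zero.mpr hε0) hz0
      · positivity
    · rw [hu, hv]
      field_simp
      ring_nf
      linear_combination (-(ε * z ^ 2 * w ^ 2 * (c ^ 2 + s ^ 2))) * hr2' -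
        (ε * z ^ 2 * ρ₁ * (c ^ 2 + s ^ 2)) * hw2 - (ε * z ^ 2 * ρ₁ * (1 - z ^ 2)) * hcs -
        (ε * z * (1 - z) * (w ^ 2 * (c ^ 2 + s ^ 2))) * hr2' - (ε * z * (1 - z) * ρ₁ * (c ^ 2 + s ^ 2)) * hw2 -
        (ε * z * (1 - z) * ρ₁ * (1 - z ^ 2)) * hcs
    · rw [hu, hv]; ring
    · rw [hu]
      field_simp
      ring_nf
      linear_combination (-c) * hε2
    · rw [hv]
      field_simp
      ring_nf
      linear_combination (-s) * hε2
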